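/- Let n > 1 and let t₀, t₁, …, t_n be nonzero integers such that gcd(t₀, ∏_{1 ≤ i < j ≤ n} (t_i^m − t_j^m)) = 1 and gcd(t_i, t₀^m + (−1)^{n−1} ∏_{j≠i, j≥1} t_j^m) = 1 for each i = 1,…,n. Let x be a root of the polynomial X·t₀^m + ∏_{j=1}^n (X − t_j^m), and let k = ℚ(x). Then for each j = 1,…,n, the principal fractional ideal (x − t_j^m) of 𝒪_k is the m-th power of a fractional ideal 𝔞_j of 𝒪_k. -/

import Mathlib

open Polynomial in
set_option synthInstance.maxHeartbeats 1000000 in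
open NumberField in
/-- Let `n > 1` and `t₀, t₁, …, t_n` be nonzero integers satisfying the coprimality
conditions `gcd(t₀, t_i^m − t_j^m) = 1` for `i ≠ j` and
`gcd(t_i, t₀^m + (−1)^{n−1} ∏_{j≠i} t_j^m) = 1`.  If `x` is a root of
`X·t₀^m + ∏ (X − t_j^m)` and `K = ℚ(x)`, then each principal fractional ideal
`(x − t_j^m)` of `𝒪_K` is an `m`-th power of a fractional ideal. -/
theorem stmt_12 (n m : ℕ) (hn : 1 < n) (hm : 0 < m)
    (t₀ : ℤ) (t : Fin n → ℤ) (ht₀ : t₀ ≠ 0) (ht : ∀ i, t i ≠ 0)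
    (h1 : ∀ i j : Fin n, i ≠ j → IsCoprime t₀ (t i ^ m - t j ^ m))
    (h2 : ∀ i, IsCoprime (t i)
      (t₀ ^ m + (-1) ^ (n - 1) * ∏ j ∈ Finset.univ.erase i, t j ^ m))
    (K : Type*) [Field K] [NumberField K] (x : K)
    (hx : x * (t₀ : K) ^ m + ∏ j, (x - (t j : K) ^ m) = 0)
    (hgen : IntermediateField.adjoin ℚ {x} = ⊤) :
    ∀ j, ∃ I : FractionalIdeal (nonZeroDivisors (RingOfIntegers K)) K,
      FractionalIdeal.spanSingleton (nonZeroDivisors (RingOfIntegers K))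
        (x - (t j : K) ^ m) = I ^ m := by
  have hxint : IsIntegral ℤ x := by
    refine ⟨X * C (t₀ ^ m) + ∏ i : Fin n, (X - C (t i ^ m)), ?_, ?_⟩
    · have hmon : (∏ i : Fin n, (X - C (t i ^ m))).Monic :=
        monic_prod_of_monic _ _ fun i _ => monic_X_sub_C _
      have hdeg : (∏ i : Fin n, (X - C (t i ^ m))).natDegree = n := by
        rw [natDegree_prod _ _ fun i _ => X_sub_C_ne_zero _]
        simp only [natDegree_X_sub_C, Finset.sum_const, Finset.card_univ, Fintype.card_fin,
          smul_eq_mul, mul_one]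
      have : (X * C (t₀ ^ m) : ℤ[X]).degree < (∏ i : Fin n, (X - C (t i ^ m))).degree := by
        rw [degree_eq_natDegree hmon.ne_zero, hdeg]
        calc (X * C (t₀ ^ m) : ℤ[X]).degree
            ≤ (X : ℤ[X]).degree + (C (t₀ ^ m) : ℤ[X]).degree := degree_mul_le _ _
          _ ≤ 1 + 0 := add_le_add degree_X_le degree_C_le
          _ = 1 := by norm_num
          _ < (n : WithBot ℕ) := by exact_mod_cast hn
      exact hmon.add_of_right this
    · simp only [eval₂_add, eval₂_mul, eval₂_X, eval₂_C, eval₂_finset_prod, eval₂_sub]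
      simpa using hx
  intro j
  set R := 𝓞 K
  set X₀ : R := ⟨x, hxint⟩ with hX₀
  set α : Fin n → R := fun i => X₀ - ((t i : ℤ) : R) ^ m with hα
  have hαcoe : ∀ i, (algebraMap R K) (α i) = x - (t i : K) ^ m := by
    intro i
    simp only [hα, hX₀, map_sub, map_pow, map_intCast]
    rfl
  set β : R := ((t₀ : ℤ) : R) ^ m + ∏ i ∈ Finset.univ.erase j, α i with hβ
  -- product identity in K
  have hprodK : ∏ i, (x - (t i : K) ^ m) = -(x * (t₀ : K) ^ m) :=
    eq_neg_of_add_eq_zero_right hx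
  have hkeyK : (x - (t j : K) ^ m) * ((t₀ : K) ^ m + ∏ i ∈ Finset.univ.erase j, (x - (t i : K) ^ m))
      = -(((t₀ * t j : ℤ) : K)) ^ m := by
    have h := Finset.mul_prod_erase Finset.univ (fun i => x - (t i : K) ^ m) (Finset.mem_univ j)
    calc (x - (t j : K) ^ m) * ((t₀ : K) ^ m + ∏ i ∈ Finset.univ.erase j, (x - (t i : K) ^ m))
        = (x - (t j : K) ^ m) * (t₀ : K) ^ m
          + (x - (t j : K) ^ m) * ∏ i ∈ Finset.univ.erase j, (x - (t i : K) ^ m) := by ring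
      _ = (x - (t j : K) ^ m) * (t₀ : K) ^ m + ∏ i, (x - (t i : K) ^ m) := by rw [h]
      _ = (x - (t j : K) ^ m) * (t₀ : K) ^ m + -(x * (t₀ : K) ^ m) := by rw [hprodK]
      _ = -(((t₀ * t j : ℤ) : K)) ^ m := by push_cast; ring
  have hkey : α j * β = -(((t₀ * t j : ℤ) : R)) ^ m := by
    apply FaithfulSMul.algebraMap_injective R K
    simp only [map_mul, map_add, map_pow, map_neg, map_prod, map_intCast, hαcoe, hβ]
    rw [map_intCast, map_intCast]
    rw [hkeyK]
  have hcne : (((t₀ * t j : ℤ) : R)) ≠ 0 := by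
    simpa using mul_ne_zero ht₀ (ht j)
  have hrhs_ne : -(((t₀ * t j : ℤ) : R)) ^ m ≠ 0 := by
    simpa using pow_ne_zero m hcne
  have hαj_ne : α j ≠ 0 := fun h => hrhs_ne (by rw [← hkey, h, zero_mul])
  have hβ_ne : β ≠ 0 := fun h => hrhs_ne (by rw [← hkey, h, mul_zero])
  -- coprimality of the two ideals
  set I : Ideal R := Ideal.span {α j} with hI
  set J : Ideal R := Ideal.span {β} with hJ
  have hsup : I ⊔ J = ⊤ := by
    by_contra hne
    obtain ⟨P, hPmax, hPle⟩ := Ideal.exists_le_maximal _ hne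
    have hαP : α j ∈ P := hPle (Ideal.mem_sup_left (Ideal.subset_span rfl))
    have hβP : β ∈ P := hPle (Ideal.mem_sup_right (Ideal.subset_span rfl))
    have hPprime : P.IsPrime := hPmax.isPrime
    have hcP : ((t₀ * t j : ℤ) : R) ∈ P := by
      have h1 : (((t₀ * t j : ℤ) : R)) ^ m ∈ P := by
        have := Ideal.mul_mem_right β P hαP
        rw [hkey] at this
        exact neg_mem_iff.mp this
      exact hPprime.mem_of_pow_mem m h1
    have hor : ((t₀ : ℤ) : R) ∈ P ∨ ((t j : ℤ) : R) ∈ P := by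
      have : ((t₀ : ℤ) : R) * ((t j : ℤ) : R) ∈ P := by rw [Int.cast_mul] at hcP; exact hcP
      exact hPprime.mem_or_mem this
    have hPne : (1 : R) ∉ P := fun h => hPmax.ne_top ((Ideal.eq_top_iff_one P).mpr h)
    rcases hor with h0 | hj
    · -- t₀ ∈ P
      have hprodP : ∏ i ∈ Finset.univ.erase j, α i ∈ P := by
        have : β - ((t₀ : ℤ) : R) ^ m ∈ P :=
          Ideal.sub_mem P hβP (Ideal.pow_mem_of_mem P h0 m hm)
        simpa [hβ] using this
      obtain ⟨i, hi, hαiP⟩ := (Ideal.IsPrime.prod_mem_iff).mp hprodP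
      have hij : j ≠ i := fun h => (Finset.mem_erase.mp hi).1 h.symm
      have hdiff : ((t j ^ m - t i ^ m : ℤ) : R) ∈ P := by
        have : α i - α j ∈ P := Ideal.sub_mem P hαiP hαP
        have heq : α i - α j = ((t j ^ m - t i ^ m : ℤ) : R) := by
          simp only [hα]
          push_cast
          ring
        rwa [heq] at this
      obtain ⟨a, b, hab⟩ := h1 j i hij
      have : (1 : R) ∈ P := by
        have := Ideal.add_mem P (Ideal.mul_mem_left P ((a : ℤ) : R) h0)
          (Ideal.mul_mem_left P ((b : ℤ) : R) hdiff)
        have hcast : ((a : ℤ) : R) * ((t₀ : ℤ) : R) + ((b : ℤ) : R) * ((t j ^ m - t i ^ m : ℤ) : R)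
            = (1 : R) := by
          have := congrArg (Int.castRingHom R) hab
          simp only [map_add, map_mul, map_sub, map_pow, map_one, eq_intCast] at this
          push_cast at this ⊢
          linear_combination this
        rwa [hcast] at this
      exact hPne this
    · -- t j ∈ P
      have hXP : X₀ ∈ P := by
        have : α j + ((t j : ℤ) : R) ^ m ∈ P :=
          Ideal.add_mem P hαP (Ideal.pow_mem_of_mem P hj m hm)
        simpa [hα] using this
      -- compute β mod P
      set c : ℤ := t₀ ^ m + (-1) ^ (n - 1) * ∏ i ∈ Finset.univ.erase j, t i ^ m with hc
      have hβc : β - ((c : ℤ) : R) ∈ P := by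
        rw [← Ideal.Quotient.eq]
        have hf : ∀ i, Ideal.Quotient.mk P (α i)
            = Ideal.Quotient.mk P (-(((t i : ℤ) : R) ^ m)) := by
          intro i
          rw [Ideal.Quotient.eq]
          simp only [hα]
          have : X₀ - ((t i : ℤ) : R) ^ m - -((t i : ℤ) : R) ^ m = X₀ := by ring
          rw [this]
          exact hXP
        rw [hβ, map_add, map_prod]
        simp only [hf]
        rw [← map_prod, ← map_add]
        congr 1
        rw [hc]
        push_cast
        have hcard : (Finset.univ.erase j).card = n - 1 := by
          rw [Finset.card_erase_of_mem (Finset.mem_univ j), Finset.card_univ, Fintype.card_fin]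
        have hneg : ∏ i ∈ Finset.univ.erase j, -(((t i : ℤ) : R) ^ m)
            = (-1 : R) ^ (n - 1) * ∏ i ∈ Finset.univ.erase j, ((t i : ℤ) : R) ^ m := by
          calc ∏ i ∈ Finset.univ.erase j, -(((t i : ℤ) : R) ^ m)
              = ∏ i ∈ Finset.univ.erase j, (-1 : R) * ((t i : ℤ) : R) ^ m := by
                simp [neg_one_mul]
            _ = (∏ _i ∈ Finset.univ.erase j, (-1 : R))
                * ∏ i ∈ Finset.univ.erase j, ((t i : ℤ) : R) ^ m := Finset.prod_mul_distrib
            _ = (-1 : R) ^ (n - 1) * ∏ i ∈ Finset.univ.erase j, ((t i : ℤ) : R) ^ m := by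
                rw [Finset.prod_const, hcard]
        rw [hneg]
        rw [Int.cast_mul]
        push_cast
        rfl
      have hcP2 : ((c : ℤ) : R) ∈ P := by
        have := Ideal.sub_mem P hβP hβc
        simpa using this
      obtain ⟨a, b, hab⟩ := h2 j
      have : (1 : R) ∈ P := by
        have hmem := Ideal.add_mem P (Ideal.mul_mem_left P ((a : ℤ) : R) hj)
          (Ideal.mul_mem_left P ((b : ℤ) : R) hcP2)
        have hcast : ((a : ℤ) : R) * ((t j : ℤ) : R) + ((b : ℤ) : R) * ((c : ℤ) : R) = (1 : R) := by
          have := congrArg (Int.castRingHom R) hab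
          simp only [map_add, map_mul, map_sub, map_pow, map_one, eq_intCast] at this
          rw [hc]
          push_cast at this ⊢
          erw [Int.cast_mul]
          push_cast
          linear_combination this
        rwa [hcast] at hmem
      exact hPne this
  -- now extract the m-th root ideal
  have hgcd : IsUnit (gcd I J) := by
    rw [Ideal.isUnit_iff, Ideal.gcd_eq_sup, hsup]
  have hIJ : I * J = (Ideal.span {((t₀ * t j : ℤ) : R)}) ^ m := by
    rw [hI, hJ, Ideal.span_singleton_mul_span_singleton, hkey, Ideal.span_singleton_pow]
    rw [← Ideal.span_singleton_neg]
    congr 2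
    ring
  obtain ⟨A, hA⟩ := exists_eq_pow_of_mul_eq_pow hgcd hIJ
  refine ⟨(A : FractionalIdeal (nonZeroDivisors R) K), ?_⟩
  rw [← FractionalIdeal.coeIdeal_pow, ← hA, hI, FractionalIdeal.coeIdeal_span_singleton, hαcoe]
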